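/- Let C be a category, W a class of morphisms of C admitting a right calculus of fractions, and S an object of C. Let W_S denote the class of those morphisms of the over-category Over S (objects: morphisms X ⟶ S of C; morphisms: commuting triangles) whose underlying morphism in C lies in W. Let L : C ⟶ C[W⁻¹] be the localization functor. Then the induced functor Over S ⟶ Over (L(S)) sends every morphism of W_S to an isomorphism, and the resulting functor (Over S)[W_S⁻¹] ⟶ Over (L(S)) is an equivalence of categories; equivalently, the functor Over S ⟶ Over (L(S)) is a localization functor with respect to W_S. -/

import Mathlib

open CategoryTheory

universe v₁ v₂ u₁ u₂

/-- The class of morphisms of the over-category `Over S` whose underlying morphism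
lies in a given class `W` of morphisms of `C`. -/
def CategoryTheory.MorphismProperty.overProp {C : Type u₁} [Category.{v₁} C]
    (W : MorphismProperty C) (S : C) : MorphismProperty (Over S) :=
  fun _ _ f => W f.left

namespace OverLocalizationProof

open CategoryTheory CategoryTheory.Category CategoryTheory.MorphismProperty

variable {C : Type u₁} {D : Type u₂} [Category.{v₁} C] [Category.{v₂} D]

lemma aux_map_eq (W : MorphismProperty C) (L : C ⥤ D) [L.IsLocalization W] {X Y : C}
    (φ : W.RightFraction X Y) :
    φ.map L (Localization.inverts L W) =
      (Localization.isoOfHom L W φ.s φ.hs).inv ≫ L.map φ.f := by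
  rw [← cancel_epi (Localization.isoOfHom L W φ.s φ.hs).hom, Iso.hom_inv_id_assoc,
    Localization.isoOfHom_hom]
  exact φ.map_s_comp_map L (Localization.inverts L W)

variable (W : MorphismProperty C) (S : C)

lemma overProp_iff {A B : Over S} (f : A ⟶ B) : W.overProp S f ↔ W f.left := Iff.rfl

variable [W.HasRightCalculusOfFractions]

instance : (W.overProp S).IsMultiplicative where
  id_mem A := by
    show W (Over.Hom.left (𝟙 A))
    rw [Over.id_left]
    exact W.id_mem A.left
  comp_mem f g hf hg := by
    show W (Over.Hom.left (f ≫ g))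
    rw [Over.comp_left]
    exact W.comp_mem _ _ hf hg

instance : (W.overProp S).HasRightCalculusOfFractions where
  exists_rightFraction A B φ := by
    obtain ⟨ψ₀, hψ₀⟩ :=
      (MorphismProperty.LeftFraction.mk φ.f.left φ.s.left φ.hs).exists_rightFraction
    dsimp at hψ₀
    have hw : ψ₀.f ≫ B.hom = ψ₀.s ≫ A.hom := by
      rw [← Over.w φ.s, ← Over.w φ.f, ← assoc, ← hψ₀, assoc]
    refine ⟨MorphismProperty.RightFraction.mk
      (X' := Over.mk (ψ₀.s ≫ A.hom))
      (Over.homMk ψ₀.s) ψ₀.hs (Over.homMk ψ₀.f hw), ?_⟩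
    ext
    simpa using hψ₀
  ext A B B' f₁ f₂ s hs hfac := by
    obtain ⟨Z, t, ht, hfac'⟩ := MorphismProperty.HasRightCalculusOfFractions.ext
      f₁.left f₂.left s.left hs (by rw [← Over.comp_left, hfac, Over.comp_left])
    refine ⟨Over.mk (t ≫ A.hom), Over.homMk t, ht, ?_⟩
    ext
    simpa using hfac'

variable (L : C ⥤ D) [L.IsLocalization W]

lemma inverts : (W.overProp S).IsInvertedBy (Over.post (X := S) L) := by
  intro A B φ hφ
  have h : IsIso (((Over.post (X := S) L).map φ).left) := Localization.inverts L W _ hφ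
  have : IsIso ((Over.forget (L.obj S)).map ((Over.post (X := S) L).map φ)) := h
  exact isIso_of_reflects_iso _ (Over.forget (L.obj S))

/-- The comparison functor from the constructed localization of `Over S` at `W.overProp S`
to `Over (L.obj S)`. -/
noncomputable def G : (W.overProp S).Localization ⥤ Over (L.obj S) :=
  Localization.lift (Over.post (X := S) L) (inverts W S L) (W.overProp S).Q

/-- The canonical isomorphism `Q ⋙ G ≅ Over.post L`. -/
noncomputable def eIso : (W.overProp S).Q ⋙ G W S L ≅ Over.post (X := S) L :=
  Localization.fac _ _ _

lemma hG {A' A B : Over S} (s : A' ⟶ A) (hs : W.overProp S s) (f : A' ⟶ B) :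
    (Over.post (X := S) L).map s ≫ (eIso W S L).inv.app A ≫
      (G W S L).map ((Localization.isoOfHom (W.overProp S).Q (W.overProp S) s hs).inv ≫
        (W.overProp S).Q.map f) ≫ (eIso W S L).hom.app B =
      (Over.post (X := S) L).map f := by
  have h1 : (Over.post (X := S) L).map s ≫ (eIso W S L).inv.app A =
      (eIso W S L).inv.app A' ≫ ((W.overProp S).Q ⋙ G W S L).map s :=
    (eIso W S L).inv.naturality s
  rw [reassoc_of% h1, ← Functor.map_comp_assoc,
    Localization.isoOfHom_hom_inv_id_assoc, ← Functor.comp_map,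
    (eIso W S L).hom.naturality f, Iso.inv_hom_id_app_assoc]

lemma bij (A B : Over S) :
    Function.Bijective
      (fun (α : (W.overProp S).Q.obj A ⟶ (W.overProp S).Q.obj B) => (G W S L).map α) := by
  constructor
  · intro α β h
    obtain ⟨κ, rfl⟩ := Localization.exists_rightFraction (W.overProp S).Q (W.overProp S) α
    obtain ⟨l, rfl⟩ := Localization.exists_rightFraction (W.overProp S).Q (W.overProp S) β
    dsimp at h
    rw [aux_map_eq, aux_map_eq] at h
    have hκχ := hG W S L κ.s κ.hs κ.f
    have hlχ : (Over.post (X := S) L).map l.s ≫ (eIso W S L).inv.app A ≫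
        (G W S L).map ((Localization.isoOfHom (W.overProp S).Q (W.overProp S) κ.s κ.hs).inv ≫
          (W.overProp S).Q.map κ.f) ≫ (eIso W S L).hom.app B =
        (Over.post (X := S) L).map l.f := by
      rw [h]
      exact hG W S L l.s l.hs l.f
    have hκC := congrArg Over.Hom.left hκχ
    have hlC := congrArg Over.Hom.left hlχ
    simp only [Over.comp_left, Over.post_map, Over.homMk_left] at hκC hlC
    have e1 : (Localization.isoOfHom L W κ.s.left κ.hs).inv ≫ L.map κ.f.left =
        ((eIso W S L).inv.app A).left ≫
          ((G W S L).map ((Localization.isoOfHom (W.overProp S).Q (W.overProp S) κ.s κ.hs).inv ≫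
            (W.overProp S).Q.map κ.f)).left ≫ ((eIso W S L).hom.app B).left := by
      have hκC' : L.map κ.s.left ≫ ((eIso W S L).inv.app A).left ≫
          ((G W S L).map ((Localization.isoOfHom (W.overProp S).Q (W.overProp S) κ.s κ.hs).inv ≫
            (W.overProp S).Q.map κ.f)).left ≫ ((eIso W S L).hom.app B).left = L.map κ.f.left :=
        hκC
      rw [← hκC']
      exact Iso.inv_hom_id_assoc (Localization.isoOfHom L W κ.s.left κ.hs) _
    have e2 : (Localization.isoOfHom L W l.s.left l.hs).inv ≫ L.map l.f.left =
        ((eIso W S L).inv.app A).left ≫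
          ((G W S L).map ((Localization.isoOfHom (W.overProp S).Q (W.overProp S) κ.s κ.hs).inv ≫
            (W.overProp S).Q.map κ.f)).left ≫ ((eIso W S L).hom.app B).left := by
      have hlC' : L.map l.s.left ≫ ((eIso W S L).inv.app A).left ≫
          ((G W S L).map ((Localization.isoOfHom (W.overProp S).Q (W.overProp S) κ.s κ.hs).inv ≫
            (W.overProp S).Q.map κ.f)).left ≫ ((eIso W S L).hom.app B).left = L.map l.f.left :=
        hlC
      rw [← hlC']
      exact Iso.inv_hom_id_assoc (Localization.isoOfHom L W l.s.left l.hs) _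
    have hC : (MorphismProperty.RightFraction.mk κ.s.left κ.hs κ.f.left).map L
          (Localization.inverts L W) =
        (MorphismProperty.RightFraction.mk l.s.left l.hs l.f.left).map L
          (Localization.inverts L W) := by
      rw [aux_map_eq, aux_map_eq]
      dsimp only
      rw [e1, e2]
    obtain ⟨Z, t₁, t₂, hst, hft, ht⟩ :=
      (MorphismProperty.RightFraction.map_eq_iff L W _ _).1 hC
    dsimp only at t₁ t₂ hst hft ht
    refine (MorphismProperty.RightFraction.map_eq_iff (W.overProp S).Q (W.overProp S) κ l).2
      ⟨Over.mk (t₁ ≫ κ.X'.hom), Over.homMk t₁, Over.homMk t₂ ?_, ?_, ?_, ?_⟩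
    · simp only [CategoryTheory.Over.mk_hom]
      rw [← Over.w l.s, ← Over.w κ.s, ← assoc, ← assoc, hst]
    · ext
      simpa using hst
    · ext
      simpa using hft
    · rw [overProp_iff]
      simpa using ht
  · intro ψt
    set ψ := (eIso W S L).inv.app A ≫ ψt ≫ (eIso W S L).hom.app B with hψ
    obtain ⟨φ, hφ⟩ := Localization.exists_rightFraction L W
      (ψ.left : L.obj A.left ⟶ L.obj B.left)
    have hw : ψ.left ≫ L.map B.hom = L.map A.hom := Over.w ψ
    have heq : L.map (φ.f ≫ B.hom) = L.map (φ.s ≫ A.hom) := by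
      rw [L.map_comp, L.map_comp, ← φ.map_s_comp_map L (Localization.inverts L W), ← hφ]
      exact (assoc _ _ _).trans (congrArg (L.map φ.s ≫ ·) hw)
    obtain ⟨Z, t, ht, hcomm⟩ := (MorphismProperty.map_eq_iff_precomp L W _ _).1 heq
    have hwf : (t ≫ φ.f) ≫ B.hom = (Over.mk ((t ≫ φ.s) ≫ A.hom)).hom := by
      simp only [CategoryTheory.Over.mk_hom]
      rw [assoc, assoc, hcomm]
    let A' : Over S := Over.mk ((t ≫ φ.s) ≫ A.hom)
    let σ : A' ⟶ A := Over.homMk (t ≫ φ.s)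
    let fφ : A' ⟶ B := Over.homMk (t ≫ φ.f) hwf
    have hσ : (W.overProp S) σ := W.comp_mem t φ.s ht φ.hs
    refine ⟨(Localization.isoOfHom (W.overProp S).Q (W.overProp S) σ hσ).inv ≫
      (W.overProp S).Q.map fφ, ?_⟩
    have h1 := hG W S L σ hσ fφ
    have h2 : (Over.post (X := S) L).map σ ≫ ψ = (Over.post (X := S) L).map fφ := by
      ext
      show L.map (t ≫ φ.s) ≫ ψ.left = L.map (t ≫ φ.f)
      rw [hφ, L.map_comp, L.map_comp]
      exact (assoc _ _ _).trans (congrArg (L.map t ≫ ·) (φ.map_s_comp_map L _))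
    have h3 : (eIso W S L).inv.app A ≫
        (G W S L).map ((Localization.isoOfHom (W.overProp S).Q (W.overProp S) σ hσ).inv ≫
          (W.overProp S).Q.map fφ) ≫ (eIso W S L).hom.app B = ψ := by
      haveI : IsIso ((Over.post (X := S) L).map σ) := inverts W S L σ hσ
      rw [← cancel_epi ((Over.post (X := S) L).map σ), h1, h2]
    dsimp only
    calc (G W S L).map ((Localization.isoOfHom (W.overProp S).Q (W.overProp S) σ hσ).inv ≫
          (W.overProp S).Q.map fφ)
        = (eIso W S L).hom.app A ≫ ((eIso W S L).inv.app A ≫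
            (G W S L).map ((Localization.isoOfHom (W.overProp S).Q (W.overProp S) σ hσ).inv ≫
              (W.overProp S).Q.map fφ) ≫ (eIso W S L).hom.app B) ≫
            (eIso W S L).inv.app B := by simp
      _ = (eIso W S L).hom.app A ≫ ψ ≫ (eIso W S L).inv.app B := by rw [h3]
      _ = ψt := by rw [hψ]; simp

lemma G_faithful : (G W S L).Faithful := by
  haveI : (W.overProp S).Q.EssSurj := Localization.essSurj _ (W.overProp S)
  refine ⟨fun {X Y} α β h => ?_⟩
  let iX := (W.overProp S).Q.objObjPreimageIso X
  let iY := (W.overProp S).Q.objObjPreimageIso Y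
  have h' := (bij W S L _ _).1 (a₁ := iX.hom ≫ α ≫ iY.inv) (a₂ := iX.hom ≫ β ≫ iY.inv)
    (by simp only [Functor.map_comp, h])
  calc α = iX.inv ≫ (iX.hom ≫ α ≫ iY.inv) ≫ iY.hom := by simp
    _ = iX.inv ≫ (iX.hom ≫ β ≫ iY.inv) ≫ iY.hom := by rw [h']
    _ = β := by simp

lemma G_full : (G W S L).Full := by
  haveI : (W.overProp S).Q.EssSurj := Localization.essSurj _ (W.overProp S)
  refine ⟨fun {X Y} ψ => ?_⟩
  let iX := (W.overProp S).Q.objObjPreimageIso X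
  let iY := (W.overProp S).Q.objObjPreimageIso Y
  obtain ⟨α, hα⟩ := (bij W S L _ _).2 ((G W S L).map iX.hom ≫ ψ ≫ (G W S L).map iY.inv)
  dsimp only at hα
  refine ⟨iX.inv ≫ α ≫ iY.hom, ?_⟩
  have cX : (G W S L).map iX.inv ≫ (G W S L).map iX.hom = 𝟙 _ := by
    rw [← Functor.map_comp, iX.inv_hom_id, CategoryTheory.Functor.map_id]
  have cY : (G W S L).map iY.inv ≫ (G W S L).map iY.hom = 𝟙 _ := by
    rw [← Functor.map_comp, iY.inv_hom_id, CategoryTheory.Functor.map_id]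
  rw [Functor.map_comp, Functor.map_comp, hα]
  simp only [assoc]
  rw [reassoc_of% cX, cY, comp_id]

lemma G_essSurj : (G W S L).EssSurj := by
  haveI : L.EssSurj := Localization.essSurj L W
  refine ⟨fun d => ?_⟩
  obtain ⟨φ, hφ⟩ := Localization.exists_rightFraction L W
    ((L.objObjPreimageIso d.left).hom ≫ d.hom)
  refine ⟨(W.overProp S).Q.obj (Over.mk φ.f),
    ⟨(eIso W S L).app (Over.mk φ.f) ≪≫
      Over.isoMk ((Localization.isoOfHom L W φ.s φ.hs) ≪≫ L.objObjPreimageIso d.left) ?_⟩⟩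
  show ((Localization.isoOfHom L W φ.s φ.hs).hom ≫ (L.objObjPreimageIso d.left).hom) ≫ d.hom =
    L.map φ.f
  rw [assoc, hφ, Localization.isoOfHom_hom]
  exact φ.map_s_comp_map L (Localization.inverts L W)

end OverLocalizationProof

/-- If `W` admits a right calculus of fractions and `L : C ⥤ D` is a localization functor
with respect to `W`, then the induced functor `Over S ⥤ Over (L.obj S)` inverts the class
`W_S` of morphisms of `Over S` lying in `W`, and is a localization functor with respect
to `W_S`; in particular `(Over S)[W_S⁻¹] ≃ Over (L.obj S)`. -/
theorem over_post_isLocalization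
    {C : Type u₁} {D : Type u₂} [Category.{v₁} C] [Category.{v₂} D]
    (W : MorphismProperty C) [W.HasRightCalculusOfFractions]
    (L : C ⥤ D) [L.IsLocalization W] (S : C) :
    (W.overProp S).IsInvertedBy (Over.post (X := S) L) ∧
      (Over.post (X := S) L).IsLocalization (W.overProp S) := by
  refine ⟨OverLocalizationProof.inverts W S L, ?_⟩
  haveI := OverLocalizationProof.G_faithful W S L
  haveI := OverLocalizationProof.G_full W S L
  haveI := OverLocalizationProof.G_essSurj W S L
  haveI : (OverLocalizationProof.G W S L).IsEquivalence := {}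
  exact Functor.IsLocalization.of_equivalence_target (W.overProp S).Q (W.overProp S)
    (Over.post (X := S) L) (OverLocalizationProof.G W S L).asEquivalence
    (OverLocalizationProof.eIso W S L)
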